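/- For any integers m, n, the points O = (0,0,0), P = (8m - 9n, 5m + 4n, -3m - n), Q = (-m - 8n, 9m - 5n, -4m + 3n) form an equilateral triangle with side length 7√(2(m² - mn + n²)), and P, Q lie in the plane x + 5y + 11z = 0. -/
import Mathlib

/-- Parametrization of the family in the plane x + 5y + 11z = 0: the points
`O`, `P`, `Q` form an equilateral triangle of side length `7√(2(m²-mn+n²))`. -/
theorem T_param_12 (m n : ℤ) :
    (8*m - 9*n) ^ 2 + (5*m + 4*n) ^ 2 + (-3*m - n) ^ 2 = 2 * 7 ^ 2 * (m ^ 2 - m * n + n ^ 2) ∧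
    (-m - 8*n) ^ 2 + (9*m - 5*n) ^ 2 + (-4*m + 3*n) ^ 2 = 2 * 7 ^ 2 * (m ^ 2 - m * n + n ^ 2) ∧
    ((8*m - 9*n) - (-m - 8*n)) ^ 2 + ((5*m + 4*n) - (9*m - 5*n)) ^ 2 + ((-3*m - n) - (-4*m + 3*n)) ^ 2
      = 2 * 7 ^ 2 * (m ^ 2 - m * n + n ^ 2) ∧
    Real.sqrt (((8*m - 9*n : ℤ) : ℝ) ^ 2 + ((5*m + 4*n : ℤ) : ℝ) ^ 2 + ((-3*m - n : ℤ) : ℝ) ^ 2)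
      = 7 * Real.sqrt (2 * ((m : ℝ) ^ 2 - m * n + n ^ 2)) ∧
    (8*m - 9*n) + 5 * (5*m + 4*n) + 11 * (-3*m - n) = 0 ∧ (-m - 8*n) + 5 * (9*m - 5*n) + 11 * (-4*m + 3*n) = 0 := by
  refine ⟨by ring, by ring, by ring, ?_, by ring, by ring⟩
  have h : (((8*m - 9*n : ℤ) : ℝ) ^ 2 + ((5*m + 4*n : ℤ) : ℝ) ^ 2 + ((-3*m - n : ℤ) : ℝ) ^ 2)
      = 7 ^ 2 * (2 * ((m : ℝ) ^ 2 - m * n + n ^ 2)) := by push_cast; ring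
  rw [h, Real.sqrt_mul (by positivity), Real.sqrt_sq (by norm_num)]
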